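/- Let k ≥ 1 and let x = (x¹,…,x^{k+1}) and y = (y¹,…,y^{k+1}) in (ℝ²)^{k+1} be non-degenerate configurations. Then x and y have the same area type (that is, x^i·x^{j⊥} = y^i·y^{j⊥} for all 1 ≤ i < j ≤ k+1) if and only if there exists a unique g ∈ SL₂(ℝ) such that y^i = g x^i for every i = 1,…,k+1. -/

import Mathlib

open MeasureTheory Real
open scoped ENNReal

noncomputable section

/-- The plane `ℝ²` with the Euclidean norm. -/
abbrev Plane : Type := EuclideanSpace ℝ (Fin 2)

/-- The point `(a, b) ∈ ℝ²`. -/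
def e2 (a b : ℝ) : Plane := (WithLp.equiv 2 (Fin 2 → ℝ)).symm ![a, b]

/-- The signed area `x · y^⊥`, where `y^⊥ = (−y₂, y₁)`. -/
def sarea (x y : Plane) : ℝ := x 0 * (-(y 1)) + x 1 * y 0

/-- The action of `SL₂(ℝ)` on `ℝ²` by matrix-vector multiplication. -/
def SL2act (g : Matrix.SpecialLinearGroup (Fin 2) ℝ) (v : Plane) : Plane :=
  (WithLp.equiv 2 (Fin 2 → ℝ)).symm
    (Matrix.mulVec (g : Matrix (Fin 2) (Fin 2) ℝ) ((WithLp.equiv 2 (Fin 2 → ℝ)) v))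

lemma SL2act_apply (g : Matrix.SpecialLinearGroup (Fin 2) ℝ) (v : Plane) (i : Fin 2) :
    SL2act g v i = (g : Matrix (Fin 2) (Fin 2) ℝ) i 0 * v 0
      + (g : Matrix (Fin 2) (Fin 2) ℝ) i 1 * v 1 := by
  have h : SL2act g v i = Matrix.mulVec (g : Matrix (Fin 2) (Fin 2) ℝ) (fun j => v j) i := rfl
  rw [h]
  simp [Matrix.mulVec, dotProduct, Fin.sum_univ_two]

lemma sarea_SL2act (g : Matrix.SpecialLinearGroup (Fin 2) ℝ) (u v : Plane) :
    sarea (SL2act g u) (SL2act g v) = sarea u v := by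
  have hdet := g.prop
  rw [Matrix.det_fin_two] at hdet
  simp only [sarea, SL2act_apply]
  linear_combination (u 1 * v 0 - u 0 * v 1) * hdet

lemma sarea_inj (a b v w : Plane) (hab : sarea a b ≠ 0)
    (h1 : sarea a v = sarea a w) (h2 : sarea b v = sarea b w) : v = w := by
  simp only [sarea] at h1 h2 hab
  have h0 : v 0 = w 0 := by
    apply mul_left_cancel₀ hab
    linear_combination b 0 * h1 - a 0 * h2
  have h1' : v 1 = w 1 := by
    apply mul_left_cancel₀ hab
    linear_combination b 1 * h1 - a 1 * h2
  ext i
  fin_cases i <;> assumption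

/-- Two non-degenerate `(k+1)`-point configurations `x, y` in `ℝ²` have the same
area type (i.e. `x^i·x^{j⊥} = y^i·y^{j⊥}` for all `i < j`) if and only if there is a
unique `g ∈ SL₂(ℝ)` with `y^i = g x^i` for every `i`. -/
theorem statement2 (k : ℕ) (hk : 1 ≤ k) (x y : Fin (k + 1) → Plane)
    (hx : sarea (x 0) (x 1) ≠ 0) (hy : sarea (y 0) (y 1) ≠ 0) :
    (∀ i j : Fin (k + 1), i < j → sarea (x i) (x j) = sarea (y i) (y j)) ↔
      (∃! g : Matrix.SpecialLinearGroup (Fin 2) ℝ, ∀ i, y i = SL2act g (x i)) := by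
  have hv1 : ((1 : Fin (k+1)) : ℕ) = 1 := by
    rw [Fin.val_one']
    exact Nat.mod_eq_of_lt (by omega)
  have h01 : (0 : Fin (k+1)) < 1 := by
    rw [Fin.lt_def, hv1]; simp
  -- uniqueness is common to both directions
  have uniq : ∀ g1 g2 : Matrix.SpecialLinearGroup (Fin 2) ℝ,
      (∀ i, y i = SL2act g1 (x i)) → (∀ i, y i = SL2act g2 (x i)) → g1 = g2 := by
    intro g1 g2 hg1 hg2
    have E : ∀ (j : Fin (k+1)) (r : Fin 2),
        (g1 : Matrix (Fin 2) (Fin 2) ℝ) r 0 * x j 0 + (g1 : Matrix (Fin 2) (Fin 2) ℝ) r 1 * x j 1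
        = (g2 : Matrix (Fin 2) (Fin 2) ℝ) r 0 * x j 0
          + (g2 : Matrix (Fin 2) (Fin 2) ℝ) r 1 * x j 1 := by
      intro j r
      have h12 : SL2act g1 (x j) = SL2act g2 (x j) := (hg1 j).symm.trans (hg2 j)
      have := congrArg (fun v : Plane => v r) h12
      simpa [SL2act_apply] using this
    have hxs : sarea (x 0) (x 1) ≠ 0 := hx
    simp only [sarea] at hxs
    apply Subtype.ext
    apply Matrix.ext
    intro r c
    have hc0 : (g1 : Matrix (Fin 2) (Fin 2) ℝ) r 0 = (g2 : Matrix (Fin 2) (Fin 2) ℝ) r 0 := by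
      apply mul_left_cancel₀ hxs
      linear_combination (-(x 1 1)) * E 0 r + x 0 1 * E 1 r
    have hc1 : (g1 : Matrix (Fin 2) (Fin 2) ℝ) r 1 = (g2 : Matrix (Fin 2) (Fin 2) ℝ) r 1 := by
      apply mul_left_cancel₀ hxs
      linear_combination x 1 0 * E 0 r - x 0 0 * E 1 r
    fin_cases c
    · exact hc0
    · exact hc1
  constructor
  · intro h
    have hsy : sarea (x 0) (x 1) = sarea (y 0) (y 1) := h 0 1 h01
    set d : ℝ := x 0 0 * x 1 1 - x 0 1 * x 1 0 with hd_def
    have hd : d ≠ 0 := by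
      intro h0
      apply hx
      simp only [sarea]
      linarith [h0]
    set m : Matrix (Fin 2) (Fin 2) ℝ :=
      !![(y 0 0 * x 1 1 - y 1 0 * x 0 1)/d, (y 1 0 * x 0 0 - y 0 0 * x 1 0)/d;
         (y 0 1 * x 1 1 - y 1 1 * x 0 1)/d, (y 1 1 * x 0 0 - y 0 1 * x 1 0)/d] with hm_def
    have hdet : m.det = 1 := by
      rw [hm_def, Matrix.det_fin_two_of]
      simp only [sarea] at hsy
      field_simp
      linear_combination (x 0 0 * x 1 1 - x 0 1 * x 1 0) * hsy
    set g : Matrix.SpecialLinearGroup (Fin 2) ℝ := ⟨m, hdet⟩ with hg_def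
    have hgm : (g : Matrix (Fin 2) (Fin 2) ℝ) = m := rfl
    have hg0 : y 0 = SL2act g (x 0) := by
      ext i
      rw [SL2act_apply, hgm, hm_def]
      fin_cases i <;>
        · simp [Matrix.cons_val_zero, Matrix.cons_val_one, Matrix.head_cons]
          field_simp
          ring
    have hg1 : y 1 = SL2act g (x 1) := by
      ext i
      rw [SL2act_apply, hgm, hm_def]
      fin_cases i <;>
        · simp [Matrix.cons_val_zero, Matrix.cons_val_one, Matrix.head_cons]
          field_simp
          ring
    have hgall : ∀ i, y i = SL2act g (x i) := by
      intro i
      by_cases hi0 : i = 0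
      · rw [hi0]; exact hg0
      by_cases hi1 : i = 1
      · rw [hi1]; exact hg1
      have h0v : (i : ℕ) ≠ 0 := fun hh => hi0 (Fin.ext (by simp [hh]))
      have h1v : (i : ℕ) ≠ 1 := fun hh => hi1 (Fin.ext (by rw [hv1, hh]))
      have h0i : (0 : Fin (k+1)) < i := by rw [Fin.lt_def]; simp; omega
      have h1i : (1 : Fin (k+1)) < i := by rw [Fin.lt_def, hv1]; omega
      apply sarea_inj (y 0) (y 1) (y i) (SL2act g (x i)) hy
      · have hr : sarea (y 0) (SL2act g (x i)) = sarea (x 0) (x i) := by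
          conv_lhs => rw [hg0]
          rw [sarea_SL2act]
        rw [hr]
        exact (h 0 i h0i).symm
      · have hr : sarea (y 1) (SL2act g (x i)) = sarea (x 1) (x i) := by
          conv_lhs => rw [hg1]
          rw [sarea_SL2act]
        rw [hr]
        exact (h 1 i h1i).symm
    exact ⟨g, hgall, fun g' hg' => uniq g' g hg' hgall⟩
  · rintro ⟨g, hg, -⟩ i j hij
    rw [hg i, hg j, sarea_SL2act]
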